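/- Let u ∈ S_n and let D be a pipe dream for u. Let i be maximal such that there exists j with (i,j) ∉ D and (i,j+1) ∈ D; let j be maximal with (i,j) ∉ D and (i,j+1) ∈ D; and let k > j be minimal such that (i,k+1) ∉ D. Then one can perform the inverse ladder moves L^{-1}_{i,j+1}, L^{-1}_{i,j+2}, …, L^{-1}_{i,k} in this order: each successive move is a valid inverse ladder move on the pipe dream produced by the previous ones, and each intermediate result is a pipe dream for u. -/

import Mathlib

open scoped Classical

/-- The Lehmer code of a permutation of `ℕ` (0-indexed):
`lehmerCode w i = #{j | j > i ∧ w j < w i}`. -/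
noncomputable def lehmerCode (w : Equiv.Perm ℕ) (i : ℕ) : ℕ :=
  Set.ncard {j | i < j ∧ w j < w i}

/-- The number of inversions of a permutation of `ℕ`. -/
noncomputable def inversions (w : Equiv.Perm ℕ) : ℕ :=
  Set.ncard {p : ℕ × ℕ | p.1 < p.2 ∧ w p.2 < w p.1}

/-- The word of a pipe-dream candidate `D ⊆ Δ_n` (0-indexed positions): read the rows
top to bottom and each row from right to left; a cross at `(i, j)` contributes the
letter `i + j` (this is the letter `i + j - 1` in 1-indexed conventions). -/
def pdWord (n : ℕ) (D : Finset (ℕ × ℕ)) : List ℕ :=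
  ((List.range n).map fun i =>
    (((List.range n).reverse.filter fun j => decide ((i, j) ∈ D)).map
      fun j => i + j)).flatten

/-- The permutation traced out by the pipes of `D`: the product of the simple
transpositions given by the word of `D`. -/
def pdPerm (n : ℕ) (D : Finset (ℕ × ℕ)) : Equiv.Perm ℕ :=
  ((pdWord n D).map fun k => Equiv.swap k (k + 1)).prod

/-- `D` is a (reduced) pipe dream for `u` inside the staircase
`Δ_n = {(i,j) : i + j + 1 ≤ n}` (0-indexed): the pipes trace out the permutation `u`
(the pipe entering the top of column `j` exits the left edge in row `i` with `u i = j`),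
and no two pipes cross more than once, i.e. `#D = ℓ(u)`. -/
def IsPipeDream (n : ℕ) (u : Equiv.Perm ℕ) (D : Finset (ℕ × ℕ)) : Prop :=
  (∀ p ∈ D, p.1 + p.2 + 1 ≤ n) ∧ pdPerm n D = u ∧ D.card = inversions u

/-- The weight of a pipe dream: `wt D i` is the number of crosses in (0-indexed) row `i`. -/
def wt (D : Finset (ℕ × ℕ)) (i : ℕ) : ℕ := (D.filter fun p => p.1 = i).card
/-- `D'` is obtained from `D` by the ladder move `L_{i,j}` (with parameter `m`),
which moves the cross at `(i, j)` to `(i - m, j + 1)`: here (0-indexed) `0 < m ≤ i`,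
`(i,j) ∈ D`, `(i,j+1) ∉ D`, `(i-m,j), (i-m,j+1) ∉ D`, and `(i-k,j), (i-k,j+1) ∈ D`
for all `1 ≤ k < m`. -/
def IsLadderMove (D D' : Finset (ℕ × ℕ)) (i j m : ℕ) : Prop :=
  0 < m ∧ m ≤ i ∧ (i, j) ∈ D ∧ (i, j + 1) ∉ D ∧
  (i - m, j) ∉ D ∧ (i - m, j + 1) ∉ D ∧
  (∀ k, 1 ≤ k → k < m → ((i - k, j) ∈ D ∧ (i - k, j + 1) ∈ D)) ∧
  D' = insert (i - m, j + 1) (D.erase (i, j))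

/-- `E'` is obtained from `E` by the inverse ladder move `L⁻¹_{r,c}`, moving the cross
at `(r, c)` down to column `c - 1`: i.e. some ladder move `L_{i,c-1}` with `i - m = r`
takes `E'` back to `E`. -/
def IsInvLadderMove (E E' : Finset (ℕ × ℕ)) (r c : ℕ) : Prop :=
  ∃ i m, r = i - m ∧ IsLadderMove E' E i (c - 1) m


noncomputable def wp (w : List ℕ) : Equiv.Perm ℕ :=
  (w.map fun k => Equiv.swap k (k + 1)).prod

lemma wp_cons (d : ℕ) (w : List ℕ) : wp (d :: w) = Equiv.swap d (d+1) * wp w := by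
  simp [wp]

lemma wp_fix {w : List ℕ} {v : ℕ} (h : ∀ d ∈ w, d ≠ v ∧ d + 1 ≠ v) : wp w v = v := by
  induction w with
  | nil => rfl
  | cons d w ih =>
    rw [wp_cons]
    have h' := h d (by simp)
    simp only [Equiv.Perm.mul_apply]
    rw [ih (fun d hd => h d (by simp [hd]))]
    exact Equiv.swap_apply_of_ne_of_ne (Ne.symm h'.1) (Ne.symm h'.2)

lemma pdPerm_eq_wp (n : ℕ) (D : Finset (ℕ × ℕ)) : pdPerm n D = wp (pdWord n D) := rfl

def rowW (n r : ℕ) (D : Finset (ℕ × ℕ)) : List ℕ :=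
  ((List.range n).reverse.filter fun j => decide ((r, j) ∈ D)).map fun j => r + j

lemma wp_fix_of_ge {w : List ℕ} {N : ℕ} (hw : ∀ d ∈ w, d + 1 < N) {x : ℕ} (hx : N ≤ x) :
    wp w x = x :=
  wp_fix (fun d hd => by have := hw d hd; omega)

lemma inv_subset {σ : Equiv.Perm ℕ} {N : ℕ} (hσ : ∀ x, N ≤ x → σ x = x) :
    {p : ℕ × ℕ | p.1 < p.2 ∧ σ p.2 < σ p.1} ⊆ Set.Iio N ×ˢ Set.Iio N := by
  have hmap : ∀ y, y < N → σ y < N := by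
    intro y hy
    by_contra h
    push_neg at h
    have h2 := hσ (σ y) h
    have h3 := σ.injective h2
    omega
  rintro ⟨p, q⟩ ⟨h1, h2⟩
  simp only [Set.mem_setOf_eq] at h1 h2
  simp only [Set.mem_prod, Set.mem_Iio]
  constructor
  · by_contra hp; push_neg at hp
    have hq : N ≤ q := le_trans hp (le_of_lt h1)
    rw [hσ p hp, hσ q hq] at h2; omega
  · by_contra hq; push_neg at hq
    rw [hσ q hq] at h2
    by_cases hp : p < N
    · have := hmap p hp; omega
    · push_neg at hp; rw [hσ p hp] at h2; omega

lemma inv_finite {σ : Equiv.Perm ℕ} {N : ℕ} (hσ : ∀ x, N ≤ x → σ x = x) :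
    {p : ℕ × ℕ | p.1 < p.2 ∧ σ p.2 < σ p.1}.Finite :=
  ((Set.finite_Iio N).prod (Set.finite_Iio N)).subset (inv_subset hσ)

lemma swap_lt {d x y : ℕ} (hxy : x < y) (hne : ¬(x = d ∧ y = d+1)) :
    Equiv.swap d (d+1) x < Equiv.swap d (d+1) y := by
  rcases not_and_or.mp hne with h | h <;>
  · simp only [Equiv.swap_apply_def]
    split_ifs <;> omega

lemma inv_step {σ : Equiv.Perm ℕ} {N : ℕ} (hσ : ∀ x, N ≤ x → σ x = x) (d : ℕ) :
    inversions (Equiv.swap d (d+1) * σ) ≤ inversions σ + 1 := by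
  set τ := Equiv.swap d (d+1) * σ with hτ
  have hsub : {p : ℕ × ℕ | p.1 < p.2 ∧ τ p.2 < τ p.1} ⊆
      {p : ℕ × ℕ | p.1 < p.2 ∧ σ p.2 < σ p.1} ∪ {(σ⁻¹ d, σ⁻¹ (d+1))} := by
    rintro ⟨p, q⟩ ⟨h1, h2⟩
    simp only [Set.mem_setOf_eq] at h1 h2
    simp only [Set.mem_union, Set.mem_setOf_eq, Set.mem_singleton_iff]
    by_cases hc : σ q < σ p
    · exact Or.inl ⟨h1, hc⟩
    · right
      push_neg at hc
      have hne : p ≠ q := ne_of_lt h1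
      have hlt : σ p < σ q := lt_of_le_of_ne hc (fun h => hne (σ.injective h))
      have h2' : Equiv.swap d (d+1) (σ q) < Equiv.swap d (d+1) (σ p) := by
        simpa [hτ, Equiv.Perm.mul_apply] using h2
      by_contra hne'
      have hdd : ¬(σ p = d ∧ σ q = d + 1) := by
        rintro ⟨ha, hb⟩
        apply hne'
        have : p = σ⁻¹ d := by rw [← ha]; simp
        have : q = σ⁻¹ (d+1) := by rw [← hb]; simp
        simp_all
      have := swap_lt hlt hdd
      omega
  have hfinA := inv_finite hσ
  calc inversions τ ≤ ({p : ℕ × ℕ | p.1 < p.2 ∧ σ p.2 < σ p.1} ∪ {(σ⁻¹ d, σ⁻¹ (d+1))}).ncard :=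
        Set.ncard_le_ncard hsub (hfinA.union (Set.finite_singleton _))
    _ ≤ _ + _ := Set.ncard_union_le _ _
    _ = inversions σ + 1 := by rw [Set.ncard_singleton]; rfl

lemma inversions_one : inversions (1 : Equiv.Perm ℕ) = 0 := by
  have : {p : ℕ × ℕ | p.1 < p.2 ∧ (1 : Equiv.Perm ℕ) p.2 < (1 : Equiv.Perm ℕ) p.1} = ∅ := by
    ext ⟨p, q⟩; simp; omega
  rw [inversions, this, Set.ncard_empty]

lemma inversions_wp_le (w : List ℕ) : inversions (wp w) ≤ w.length := by
  have main : ∀ (w : List ℕ) (N : ℕ), (∀ d ∈ w, d + 1 < N) → inversions (wp w) ≤ w.length := by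
    intro w
    induction w with
    | nil => intro N _; rw [show wp [] = 1 from rfl, inversions_one]; simp
    | cons d w ih =>
      intro N hN
      rw [wp_cons]
      have htail : ∀ d ∈ w, d + 1 < N := fun d hd => hN d (by simp [hd])
      have hfix : ∀ x, N ≤ x → wp w x = x := fun x hx => wp_fix_of_ge htail hx
      calc inversions (Equiv.swap d (d+1) * wp w) ≤ inversions (wp w) + 1 := inv_step hfix d
        _ ≤ w.length + 1 := by have := ih N htail; omega
        _ = (d :: w).length := by simp
  apply main w (w.sum + 2)
  intro d hd
  have := List.single_le_sum (l := w) (fun x _ => Nat.zero_le x) d hd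
  omega

lemma wp_append (w₁ w₂ : List ℕ) : wp (w₁ ++ w₂) = wp w₁ * wp w₂ := by simp [wp]


def HiW (n r c : ℕ) (D : Finset (ℕ × ℕ)) : List ℕ :=
  ((List.range' (c+2) (n - (c+2))).reverse.filter fun j => decide ((r, j) ∈ D)).map fun j => r + j

def LoW (r c : ℕ) (D : Finset (ℕ × ℕ)) : List ℕ :=
  ((List.range c).reverse.filter fun j => decide ((r, j) ∈ D)).map fun j => r + j

lemma range'_app (a b c : ℕ) : List.range' a b ++ List.range' (a+b) c = List.range' a (b+c) := by
  have : List.range' a b 1 ++ List.range' (a + 1 * b) c 1 = List.range' a (b + c) 1 :=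
    List.range'_append
  simpa [Nat.add_comm] using this

lemma range_reverse_split {n c : ℕ} (hc : c + 2 ≤ n) :
    (List.range n).reverse =
      (List.range' (c+2) (n - (c+2))).reverse ++ [c+1, c] ++ (List.range c).reverse := by
  have h1 : List.range n = List.range (c+2) ++ List.range' (c+2) (n - (c+2)) := by
    rw [List.range_eq_range', List.range_eq_range']
    have h := range'_app 0 (c+2) (n - (c+2))
    rw [show (0:ℕ) + (c+2) = c+2 from by omega, show c+2+(n-(c+2)) = n from by omega] at h
    exact h.symm
  have h2 : List.range (c+2) = List.range c ++ [c] ++ [c+1] := by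
    rw [show c+2 = (c+1)+1 from rfl, List.range_succ, List.range_succ]
  rw [h1, h2]
  simp [List.reverse_append]

lemma rowW_split {n r c : ℕ} (hc : c + 2 ≤ n) (D : Finset (ℕ × ℕ)) :
    rowW n r D = HiW n r c D ++
      (([c+1, c].filter fun j => decide ((r, j) ∈ D)).map fun j => r + j) ++ LoW r c D := by
  rw [rowW, range_reverse_split hc, List.filter_append, List.filter_append,
    List.map_append, List.map_append]
  rfl

lemma mem_HiW {n r c d : ℕ} {D : Finset (ℕ × ℕ)} (h : d ∈ HiW n r c D) : r + c + 2 ≤ d := by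
  rw [HiW] at h
  obtain ⟨j, hj, rfl⟩ := List.mem_map.mp h
  have := List.mem_filter.mp hj
  have hj2 := List.mem_reverse.mp this.1
  have := List.mem_range'.mp hj2
  omega

lemma mem_LoW {r c d : ℕ} {D : Finset (ℕ × ℕ)} (h : d ∈ LoW r c D) : d < r + c := by
  rw [LoW] at h
  obtain ⟨j, hj, rfl⟩ := List.mem_map.mp h
  have := List.mem_filter.mp hj
  have hj2 := List.mem_reverse.mp this.1
  have := List.mem_range.mp hj2
  omega

lemma rowW_congr {n r : ℕ} {D D' : Finset (ℕ × ℕ)} (h : ∀ j, (r, j) ∈ D ↔ (r, j) ∈ D') :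
    rowW n r D = rowW n r D' := by
  rw [rowW, rowW, List.filter_congr]
  intro j _
  exact decide_eq_decide.mpr (h j)

lemma HiW_congr {n r c : ℕ} {D D' : Finset (ℕ × ℕ)}
    (h : ∀ j, c + 2 ≤ j → ((r, j) ∈ D ↔ (r, j) ∈ D')) :
    HiW n r c D = HiW n r c D' := by
  rw [HiW, HiW, List.filter_congr]
  intro j hj
  have := List.mem_range'.mp (List.mem_reverse.mp hj)
  exact decide_eq_decide.mpr (h j (by omega))

lemma LoW_congr {r c : ℕ} {D D' : Finset (ℕ × ℕ)}
    (h : ∀ j, j < c → ((r, j) ∈ D ↔ (r, j) ∈ D')) :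
    LoW r c D = LoW r c D' := by
  rw [LoW, LoW, List.filter_congr]
  intro j hj
  have := List.mem_range.mp (List.mem_reverse.mp hj)
  exact decide_eq_decide.mpr (h j (by omega))

/-- action of the word of a row containing crosses at `c` and `c+1` -/
lemma row_action {n r c : ℕ} {D : Finset (ℕ × ℕ)} (hc : c + 2 ≤ n)
    (h1 : (r, c) ∈ D) (h2 : (r, c+1) ∈ D) :
    wp (rowW n r D) (r+c+1) = r+c ∧ wp (rowW n r D) (r+c+2) = r+c+1 := by
  rw [rowW_split hc]
  have hmid : ([c+1, c].filter fun j => decide ((r, j) ∈ D)) = [c+1, c] := by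
    simp [h1, h2]
  rw [hmid]
  have hmap : ([c+1, c].map fun j => r + j) = [r+c+1, r+c] := by
    simp [show r + (c+1) = r+c+1 from by omega]
  rw [hmap, wp_append, wp_append]
  have hLo1 : wp (LoW r c D) (r+c+1) = r+c+1 :=
    wp_fix (fun d hd => by have := mem_LoW hd; omega)
  have hLo2 : wp (LoW r c D) (r+c+2) = r+c+2 :=
    wp_fix (fun d hd => by have := mem_LoW hd; omega)
  have hin1 : Equiv.swap (r+c) (r+c+1) (r+c+1) = r+c := by
    rw [show r+c+1 = (r+c)+1 from rfl, Equiv.swap_apply_right]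
  have hin2 : Equiv.swap (r+c) (r+c+1) (r+c+2) = r+c+2 :=
    Equiv.swap_apply_of_ne_of_ne (by omega) (by omega)
  have hout1 : Equiv.swap (r+c+1) (r+c+1+1) (r+c) = r+c :=
    Equiv.swap_apply_of_ne_of_ne (by omega) (by omega)
  have hout2 : Equiv.swap (r+c+1) (r+c+1+1) (r+c+2) = r+c+1 := by
    rw [show r+c+2 = (r+c+1)+1 from rfl, Equiv.swap_apply_right]
  have hmid1 : wp [r+c+1, r+c] (r+c+1) = r+c := by
    simp only [wp, List.map_cons, List.map_nil, List.prod_cons, List.prod_nil, mul_one,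
      Equiv.Perm.mul_apply]
    rw [hin1, hout1]
  have hmid2 : wp [r+c+1, r+c] (r+c+2) = r+c+1 := by
    simp only [wp, List.map_cons, List.map_nil, List.prod_cons, List.prod_nil, mul_one,
      Equiv.Perm.mul_apply]
    rw [hin2, hout2]
  have hHi1 : wp (HiW n r c D) (r+c) = r+c :=
    wp_fix (fun d hd => by have := mem_HiW hd; omega)
  have hHi2 : wp (HiW n r c D) (r+c+1) = r+c+1 :=
    wp_fix (fun d hd => by have := mem_HiW hd; omega)
  constructor
  · simp only [Equiv.Perm.mul_apply]; rw [hLo1, hmid1, hHi1]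
  · simp only [Equiv.Perm.mul_apply]; rw [hLo2, hmid2, hHi2]

lemma chain {n i c : ℕ} {F : Finset (ℕ × ℕ)} (hcn : c + 2 ≤ n) :
    ∀ d : ℕ, (∀ q, 1 ≤ q → q ≤ d → (i+q, c) ∈ F ∧ (i+q, c+1) ∈ F) →
    ((List.range' (i+1) d).map fun r => wp (rowW n r F)).prod (i+d+c+1) = i+c+1 ∧
    ((List.range' (i+1) d).map fun r => wp (rowW n r F)).prod (i+d+c+2) = i+c+2 := by
  intro d
  induction d with
  | zero => intro _; simp
  | succ d ih =>
    intro hq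
    have hsplit : List.range' (i+1) (d+1) = List.range' (i+1) d ++ [i+1+d] := by
      have := range'_app (i+1) d 1
      rw [← this]
      rfl
    rw [hsplit, List.map_append, List.prod_append]
    have hrow := row_action (r := i+1+d) (D := F) hcn
      (by have := hq (d+1) (by omega) (le_refl _); rw [show i+1+d = i+(d+1) from by omega]; exact this.1)
      (by have := hq (d+1) (by omega) (le_refl _); rw [show i+1+d = i+(d+1) from by omega]; exact this.2)
    have ih' := ih (fun q h1 h2 => hq q h1 (by omega))
    simp only [List.map_cons, List.map_nil, List.prod_cons, List.prod_nil, mul_one,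
      Equiv.Perm.mul_apply]
    constructor
    · rw [show i+(d+1)+c+1 = (i+1+d)+c+1 from by omega, hrow.1,
        show (i+1+d)+c = i+d+c+1 from by omega, ih'.1]
    · rw [show i+(d+1)+c+2 = (i+1+d)+c+2 from by omega, hrow.2,
        show (i+1+d)+c+1 = i+d+c+2 from by omega, ih'.2]

lemma pdPerm_rows (n : ℕ) (D : Finset (ℕ × ℕ)) :
    pdPerm n D = ((List.range n).map fun r => wp (rowW n r D)).prod := by
  rw [show pdPerm n D = wp (pdWord n D) from rfl, pdWord, wp, List.map_flatten,
    List.prod_flatten, List.map_map, List.map_map]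
  rfl

lemma range_split {n i s : ℕ} (hs : 1 ≤ s) (hisn : i + s < n) :
    List.range n = List.range i ++ [i] ++ List.range' (i+1) (s-1) ++ [i+s] ++
      List.range' (i+s+1) (n - (i+s+1)) := by
  have t1 : List.range' 0 i ++ List.range' i 1 = List.range' 0 (i+1) := by
    have := range'_app 0 i 1; simpa using this
  have t2 : List.range' 0 (i+1) ++ List.range' (i+1) (s-1) = List.range' 0 (i+s) := by
    have h := range'_app 0 (i+1) (s-1)
    rw [show (0:ℕ)+(i+1) = i+1 from by omega, show i+1+(s-1) = i+s from by omega] at h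
    exact h
  have t3 : List.range' 0 (i+s) ++ List.range' (i+s) 1 = List.range' 0 (i+s+1) := by
    have := range'_app 0 (i+s) 1; simpa using this
  have t4 : List.range' 0 (i+s+1) ++ List.range' (i+s+1) (n-(i+s+1)) = List.range' 0 n := by
    have h := range'_app 0 (i+s+1) (n-(i+s+1))
    rw [show (0:ℕ)+(i+s+1) = i+s+1 from by omega,
      show i+s+1+(n-(i+s+1)) = n from by omega] at h
    exact h
  calc List.range n = List.range' 0 n := List.range_eq_range'
    _ = List.range' 0 (i+s+1) ++ List.range' (i+s+1) (n-(i+s+1)) := t4.symm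
    _ = (List.range' 0 (i+s) ++ List.range' (i+s) 1) ++ List.range' (i+s+1) (n-(i+s+1)) := by
        rw [t3]
    _ = ((List.range' 0 (i+1) ++ List.range' (i+1) (s-1)) ++ List.range' (i+s) 1) ++
          List.range' (i+s+1) (n-(i+s+1)) := by rw [t2]
    _ = (((List.range' 0 i ++ List.range' i 1) ++ List.range' (i+1) (s-1)) ++
          List.range' (i+s) 1) ++ List.range' (i+s+1) (n-(i+s+1)) := by rw [t1]
    _ = _ := by
        rw [← (List.range_eq_range' : List.range i = _), List.range'_one, List.range'_one]

lemma pdPerm_split {n i s : ℕ} (hs : 1 ≤ s) (hisn : i + s < n) (G F : Finset (ℕ × ℕ))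
    (hG : ∀ r, r ≠ i → r ≠ i+s → ∀ j, ((r, j) ∈ G ↔ (r, j) ∈ F)) :
    pdPerm n G = ((List.range i).map fun r => wp (rowW n r F)).prod *
      (wp (rowW n i G) * ((((List.range' (i+1) (s-1)).map fun r => wp (rowW n r F)).prod) *
        (wp (rowW n (i+s) G) *
          ((List.range' (i+s+1) (n-(i+s+1))).map fun r => wp (rowW n r F)).prod))) := by
  rw [pdPerm_rows, range_split hs hisn]
  have e1 : (List.range i).map (fun r => wp (rowW n r G)) =
      (List.range i).map (fun r => wp (rowW n r F)) :=
    List.map_congr_left (fun r hr => by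
      have := List.mem_range.mp hr
      exact congrArg wp (rowW_congr (hG r (by omega) (by omega))))
  have e2 : (List.range' (i+1) (s-1)).map (fun r => wp (rowW n r G)) =
      (List.range' (i+1) (s-1)).map (fun r => wp (rowW n r F)) :=
    List.map_congr_left (fun r hr => by
      have := List.mem_range'.mp hr
      obtain ⟨q, hq1, hq2⟩ := this
      exact congrArg wp (rowW_congr (hG r (by omega) (by omega))))
  have e3 : (List.range' (i+s+1) (n-(i+s+1))).map (fun r => wp (rowW n r G)) =
      (List.range' (i+s+1) (n-(i+s+1))).map (fun r => wp (rowW n r F)) :=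
    List.map_congr_left (fun r hr => by
      have := List.mem_range'.mp hr
      obtain ⟨q, hq1, hq2⟩ := this
      exact congrArg wp (rowW_congr (hG r (by omega) (by omega))))
  simp only [List.map_append, List.prod_append, List.map_cons, List.prod_cons,
    List.map_nil, List.prod_nil, mul_one]
  rw [e1, e2, e3]
  simp only [mul_assoc]

lemma mem_ins {a b r j : ℕ} (G : Finset (ℕ × ℕ)) (h : ¬(r = a ∧ j = b)) :
    ((r, j) ∈ insert (a, b) G ↔ (r, j) ∈ G) := by
  simp only [Finset.mem_insert, Prod.mk.injEq]
  tauto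

set_option maxHeartbeats 1000000 in
lemma master {n i s c : ℕ} (F : Finset (ℕ × ℕ)) (hs : 1 ≤ s) (hcn : c + 2 ≤ n)
    (hisn : i + s < n)
    (h1 : (i,c) ∉ F) (h2 : (i,c+1) ∉ F) (h3 : (i+s,c) ∉ F) (h4 : (i+s,c+1) ∉ F)
    (hbet : ∀ q, 1 ≤ q → q < s → (i+q, c) ∈ F ∧ (i+q, c+1) ∈ F) :
    pdPerm n (insert (i,c+1) F) = pdPerm n (insert (i+s,c) F) ∧
    pdPerm n (insert (i,c+1) (insert (i+s,c) F)) = pdPerm n F := by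
  have hne : i ≠ i + s := by omega
  have hGA : ∀ r, r ≠ i → r ≠ i+s → ∀ j, ((r,j) ∈ insert (i,c+1) F ↔ (r,j) ∈ F) :=
    fun r hri _ j => mem_ins F (by tauto)
  have hGB : ∀ r, r ≠ i → r ≠ i+s → ∀ j, ((r,j) ∈ insert (i+s,c) F ↔ (r,j) ∈ F) :=
    fun r _ hris j => mem_ins F (by tauto)
  have hGC : ∀ r, r ≠ i → r ≠ i+s →
      ∀ j, ((r,j) ∈ insert (i,c+1) (insert (i+s,c) F) ↔ (r,j) ∈ F) := by
    intro r hri hris j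
    rw [mem_ins _ (by tauto)]
    exact hGB r hri hris j
  have dF := pdPerm_split hs hisn F F (fun r _ _ j => Iff.rfl)
  have dA := pdPerm_split hs hisn (insert (i,c+1) F) F hGA
  have dB := pdPerm_split hs hisn (insert (i+s,c) F) F hGB
  have dC := pdPerm_split hs hisn (insert (i,c+1) (insert (i+s,c) F)) F hGC
  -- row i words
  have rowiF : wp (rowW n i F) = wp (HiW n i c F) * wp (LoW i c F) := by
    rw [rowW_split hcn]
    have hm : ([c+1, c].filter fun j => decide ((i, j) ∈ F)) = [] := by simp [h1, h2]
    rw [hm]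
    simp only [List.map_nil, List.append_nil, wp_append]
  have rowiA : wp (rowW n i (insert (i,c+1) F)) =
      wp (HiW n i c F) * (Equiv.swap (i+c+1) (i+c+2) * wp (LoW i c F)) := by
    rw [rowW_split hcn]
    have hm : ([c+1, c].filter fun j => decide ((i, j) ∈ insert (i,c+1) F)) = [c+1] := by
      have e1 : (i, c+1) ∈ insert (i,c+1) F := Finset.mem_insert_self _ _
      have e2 : (i, c) ∉ insert (i,c+1) F := by
        rw [mem_ins F (by omega)]; exact h1
      simp [e1, e2, h1]
    rw [hm]
    have hHi : HiW n i c (insert (i,c+1) F) = HiW n i c F :=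
      HiW_congr (fun j hj => mem_ins F (by omega))
    have hLo : LoW i c (insert (i,c+1) F) = LoW i c F :=
      LoW_congr (fun j hj => mem_ins F (by omega))
    rw [hHi, hLo, wp_append, wp_append]
    have hmap : ([c+1].map fun j => i + j) = [i+c+1] := by
      simp [show i + (c+1) = i+c+1 from by omega]
    rw [hmap, show wp [i+c+1] = Equiv.swap (i+c+1) (i+c+1+1) from by simp [wp],
      show i+c+1+1 = i+c+2 from rfl, mul_assoc]
  have rowiB : wp (rowW n i (insert (i+s,c) F)) = wp (HiW n i c F) * wp (LoW i c F) := by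
    rw [rowW_congr (D' := F) (fun j => mem_ins (a := i+s) (b := c) F (fun hh => hne hh.1)),
      rowiF]
  have rowiC : wp (rowW n i (insert (i,c+1) (insert (i+s,c) F))) =
      wp (HiW n i c F) * (Equiv.swap (i+c+1) (i+c+2) * wp (LoW i c F)) := by
    rw [rowW_congr (D' := insert (i,c+1) F) (fun j => by
      simp only [Finset.mem_insert, Prod.mk.injEq]
      tauto), rowiA]
  -- row i+s words
  have rowsF : wp (rowW n (i+s) F) = wp (HiW n (i+s) c F) * wp (LoW (i+s) c F) := by
    rw [rowW_split hcn]
    have hm : ([c+1, c].filter fun j => decide ((i+s, j) ∈ F)) = [] := by simp [h3, h4]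
    rw [hm]
    simp only [List.map_nil, List.append_nil, wp_append]
  have rowsA : wp (rowW n (i+s) (insert (i,c+1) F)) =
      wp (HiW n (i+s) c F) * wp (LoW (i+s) c F) := by
    rw [rowW_congr (D' := F) (fun j => mem_ins (a := i) (b := c+1) F (fun hh => hne hh.1.symm)),
      rowsF]
  have rowsB : wp (rowW n (i+s) (insert (i+s,c) F)) =
      wp (HiW n (i+s) c F) * (Equiv.swap (i+s+c) (i+s+c+1) * wp (LoW (i+s) c F)) := by
    rw [rowW_split hcn]
    have hm : ([c+1, c].filter fun j => decide ((i+s, j) ∈ insert (i+s,c) F)) = [c] := by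
      have e1 : (i+s, c) ∈ insert (i+s,c) F := Finset.mem_insert_self _ _
      have e2 : (i+s, c+1) ∉ insert (i+s,c) F := by
        rw [mem_ins F (by omega)]; exact h4
      simp [e1, e2, h4]
    rw [hm]
    have hHi : HiW n (i+s) c (insert (i+s,c) F) = HiW n (i+s) c F :=
      HiW_congr (fun j hj => mem_ins F (by omega))
    have hLo : LoW (i+s) c (insert (i+s,c) F) = LoW (i+s) c F :=
      LoW_congr (fun j hj => mem_ins F (by omega))
    rw [hHi, hLo, wp_append, wp_append]
    have hmap : ([c].map fun j => (i+s) + j) = [i+s+c] := by simp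
    rw [hmap, show wp [i+s+c] = Equiv.swap (i+s+c) (i+s+c+1) from by simp [wp], mul_assoc]
  have rowsC : wp (rowW n (i+s) (insert (i,c+1) (insert (i+s,c) F))) =
      wp (HiW n (i+s) c F) * (Equiv.swap (i+s+c) (i+s+c+1) * wp (LoW (i+s) c F)) := by
    rw [rowW_congr (D' := insert (i+s,c) F)
      (fun j => mem_ins (a := i) (b := c+1) (insert (i+s,c) F) (fun hh => hne hh.1.symm)),
      rowsB]
  -- the key conjugation
  have hch := chain (n := n) (i := i) (c := c) (F := F) hcn (s-1)
    (fun q hq1 hq2 => hbet q hq1 (by omega))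
  rw [show i+(s-1)+c+1 = i+s+c from by omega, show i+(s-1)+c+2 = i+s+c+1 from by omega] at hch
  have hLo1 : wp (LoW i c F) (i+c+1) = i+c+1 :=
    wp_fix (fun d hd => by have := mem_LoW hd; omega)
  have hLo2 : wp (LoW i c F) (i+c+2) = i+c+2 :=
    wp_fix (fun d hd => by have := mem_LoW hd; omega)
  have hHi1 : wp (HiW n (i+s) c F) (i+s+c) = i+s+c :=
    wp_fix (fun d hd => by have := mem_HiW hd; omega)
  have hHi2 : wp (HiW n (i+s) c F) (i+s+c+1) = i+s+c+1 :=
    wp_fix (fun d hd => by have := mem_HiW hd; omega)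
  set MP : Equiv.Perm ℕ := ((List.range' (i+1) (s-1)).map fun r => wp (rowW n r F)).prod with hMP
  set Q : Equiv.Perm ℕ := wp (LoW i c F) * (MP * wp (HiW n (i+s) c F)) with hQdef
  have hQ1 : Q (i+s+c) = i+c+1 := by
    rw [hQdef]
    simp only [Equiv.Perm.mul_apply]
    rw [hHi1, hch.1, hLo1]
  have hQ2 : Q (i+s+c+1) = i+c+2 := by
    rw [hQdef]
    simp only [Equiv.Perm.mul_apply]
    rw [hHi2, hch.2, hLo2]
  have hkey : Equiv.swap (i+c+1) (i+c+2) * Q = Q * Equiv.swap (i+s+c) (i+s+c+1) := by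
    have h := Equiv.swap_apply_apply Q (i+s+c) (i+s+c+1)
    rw [hQ1, hQ2] at h
    rw [h]
    simp [mul_assoc]
  -- assemble
  constructor
  · rw [dA, dB, rowiA, rowiB, rowsA, rowsB]
    congr 1
    calc wp (HiW n i c F) * (Equiv.swap (i+c+1) (i+c+2) * wp (LoW i c F)) *
          (MP * (wp (HiW n (i+s) c F) * wp (LoW (i+s) c F) *
            ((List.range' (i+s+1) (n-(i+s+1))).map fun r => wp (rowW n r F)).prod))
        = wp (HiW n i c F) * ((Equiv.swap (i+c+1) (i+c+2) * Q) *
            (wp (LoW (i+s) c F) *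
              ((List.range' (i+s+1) (n-(i+s+1))).map fun r => wp (rowW n r F)).prod)) := by
          rw [hQdef]; simp only [mul_assoc]
      _ = wp (HiW n i c F) * ((Q * Equiv.swap (i+s+c) (i+s+c+1)) *
            (wp (LoW (i+s) c F) *
              ((List.range' (i+s+1) (n-(i+s+1))).map fun r => wp (rowW n r F)).prod)) := by
          rw [hkey]
      _ = wp (HiW n i c F) * wp (LoW i c F) *
          (MP * (wp (HiW n (i+s) c F) * (Equiv.swap (i+s+c) (i+s+c+1) * wp (LoW (i+s) c F)) *
            ((List.range' (i+s+1) (n-(i+s+1))).map fun r => wp (rowW n r F)).prod)) := by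
          rw [hQdef]; simp only [mul_assoc]
  · rw [dC, dF, rowiC, rowiF, rowsC, rowsF]
    congr 1
    calc wp (HiW n i c F) * (Equiv.swap (i+c+1) (i+c+2) * wp (LoW i c F)) *
          (MP * (wp (HiW n (i+s) c F) * (Equiv.swap (i+s+c) (i+s+c+1) * wp (LoW (i+s) c F)) *
            ((List.range' (i+s+1) (n-(i+s+1))).map fun r => wp (rowW n r F)).prod))
        = wp (HiW n i c F) * ((Equiv.swap (i+c+1) (i+c+2) * Q) *
            (Equiv.swap (i+s+c) (i+s+c+1) * (wp (LoW (i+s) c F) *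
              ((List.range' (i+s+1) (n-(i+s+1))).map fun r => wp (rowW n r F)).prod))) := by
          rw [hQdef]; simp only [mul_assoc]
      _ = wp (HiW n i c F) * ((Q * Equiv.swap (i+s+c) (i+s+c+1)) *
            (Equiv.swap (i+s+c) (i+s+c+1) * (wp (LoW (i+s) c F) *
              ((List.range' (i+s+1) (n-(i+s+1))).map fun r => wp (rowW n r F)).prod))) := by
          rw [hkey]
      _ = wp (HiW n i c F) * (Q *
            ((Equiv.swap (i+s+c) (i+s+c+1) * Equiv.swap (i+s+c) (i+s+c+1)) * (wp (LoW (i+s) c F) *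
              ((List.range' (i+s+1) (n-(i+s+1))).map fun r => wp (rowW n r F)).prod))) := by
          simp only [mul_assoc]
      _ = wp (HiW n i c F) * wp (LoW i c F) *
          (MP * (wp (HiW n (i+s) c F) * wp (LoW (i+s) c F) *
            ((List.range' (i+s+1) (n-(i+s+1))).map fun r => wp (rowW n r F)).prod)) := by
          rw [Equiv.swap_mul_self, hQdef]; simp only [one_mul, mul_assoc]

lemma list_filter_length (n : ℕ) (p : ℕ → Prop) [DecidablePred p] :
    ((List.range n).filter fun j => decide (p j)).length = ((Finset.range n).filter p).card := by
  induction n with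
  | zero => simp
  | succ n ih =>
    rw [List.range_succ, List.filter_append, List.length_append, ih, Finset.range_add_one,
      Finset.filter_insert]
    by_cases h : p n
    · rw [if_pos h]
      rw [Finset.card_insert_of_notMem (by simp)]
      simp [h]
    · rw [if_neg h]
      simp [h]

lemma length_rowW (n r : ℕ) (D : Finset (ℕ × ℕ)) :
    (rowW n r D).length = ((Finset.range n).filter fun j => (r, j) ∈ D).card := by
  rw [rowW, List.length_map, ← List.length_reverse, ← List.filter_reverse, List.reverse_reverse]
  exact list_filter_length n _

lemma pdWord_length (n : ℕ) (D : Finset (ℕ × ℕ)) (hD : ∀ p ∈ D, p.1 < n ∧ p.2 < n) :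
    (pdWord n D).length = D.card := by
  have h1 : (pdWord n D).length = ∑ r ∈ Finset.range n, (rowW n r D).length := by
    rw [pdWord, List.length_flatten, List.map_map]
    rfl
  rw [h1]
  have h2 : D.card = ∑ r ∈ Finset.range n, (D.filter fun p => p.1 = r).card :=
    Finset.card_eq_sum_card_fiberwise (fun p hp => Finset.mem_range.mpr (hD p hp).1)
  rw [h2]
  apply Finset.sum_congr rfl
  intro r _
  rw [length_rowW]
  apply Finset.card_nbij (fun j => (r, j))
  · intro j hj
    simp only [Finset.mem_coe, Finset.mem_filter, Finset.mem_range] at hj ⊢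
    exact ⟨hj.2, trivial⟩
  · intro a _ b _ hab
    simpa using hab
  · rintro ⟨p1, p2⟩ hp
    simp only [Finset.coe_filter, Set.mem_setOf_eq, Finset.mem_range, Set.mem_image,
      Finset.mem_coe] at hp ⊢
    obtain ⟨hpD, hp1⟩ := hp
    subst hp1
    exact ⟨p2, ⟨(hD _ hpD).2, hpD⟩, rfl⟩

/-- Let `D` be a pipe dream for `u ∈ S_n`. Let `i` be maximal such that there is `j`
with `(i,j) ∉ D` and `(i,j+1) ∈ D`; let `j` be maximal with this property; and let
`k > j` be minimal with `(i,k+1) ∉ D`. Then the inverse ladder moves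
`L⁻¹_{i,j+1}, L⁻¹_{i,j+2}, …, L⁻¹_{i,k}` can be performed in this order: each
successive move is a valid inverse ladder move on the pipe dream produced by the
previous ones, and each intermediate result is again a pipe dream for `u`. -/
theorem inverse_ladder_moves_can_be_performed
    (n : ℕ) (u : Equiv.Perm ℕ) (hu : ∀ i, n ≤ i → u i = i)
    (D : Finset (ℕ × ℕ)) (hD : IsPipeDream n u D)
    (i j k : ℕ)
    (hij : (i, j) ∉ D ∧ (i, j + 1) ∈ D)
    (himax : ∀ i' j', (i', j') ∉ D → (i', j' + 1) ∈ D → i' ≤ i)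
    (hjmax : ∀ j', (i, j') ∉ D → (i, j' + 1) ∈ D → j' ≤ j)
    (hjk : j < k) (hk : (i, k + 1) ∉ D)
    (hkmin : ∀ k', j < k' → (i, k' + 1) ∉ D → k ≤ k') :
    ∃ E : ℕ → Finset (ℕ × ℕ), E 0 = D ∧
      ∀ t, t < k - j →
        IsInvLadderMove (E t) (E (t + 1)) i (j + 1 + t) ∧
          IsPipeDream n u (E (t + 1)) := by
  obtain ⟨hDΔ, hDperm, hDcard⟩ := hD
  have hrowi : ∀ x, j+1 ≤ x → x ≤ k → (i, x) ∈ D := by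
    intro x hx1 hx2
    by_contra hx
    rcases eq_or_lt_of_le hx1 with h | h
    · exact hx (h ▸ hij.2)
    · have h2 := hkmin (x-1) (by omega) (by rw [show x-1+1 = x from by omega]; exact hx)
      omega
  have hprefix : ∀ r x, i < r → (r, x+1) ∈ D → (r, x) ∈ D := by
    intro r x hr hmem
    by_contra hx
    have := himax r x hx hmem
    omega
  have hik : i + k + 1 ≤ n := hDΔ (i, k) (hrowi k (by omega) le_rfl)
  have mex : ∀ t : ℕ, ∃ m', 0 < m' ∧ (i+m', j+t) ∉ D ∧ (i+m', j+t+1) ∉ D := by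
    intro t
    refine ⟨n+1, by omega, fun h => ?_, fun h => ?_⟩
    · have h5 : i+(n+1) + (j+t) + 1 ≤ n := hDΔ _ h
      omega
    · have h5 : i+(n+1) + (j+t+1) + 1 ≤ n := hDΔ _ h
      omega
  have mf_pos : ∀ t, 0 < Nat.find (mex t) := fun t => (Nat.find_spec (mex t)).1
  have mf_not1 : ∀ t, (i + Nat.find (mex t), j+t) ∉ D := fun t => (Nat.find_spec (mex t)).2.1
  have mf_not2 : ∀ t, (i + Nat.find (mex t), j+t+1) ∉ D := fun t => (Nat.find_spec (mex t)).2.2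
  have mf_min : ∀ t q, 1 ≤ q → q < Nat.find (mex t) → (i+q, j+t) ∈ D := by
    intro t q h1 h2
    have h3 := Nat.find_min (mex t) h2
    by_contra hq
    rcases Classical.em ((i+q, j+t+1) ∈ D) with h' | h'
    · exact hq (hprefix _ _ (by omega) h')
    · exact h3 ⟨by omega, hq, h'⟩
  set E : ℕ → Finset (ℕ × ℕ) := fun t =>
    ((Finset.range t).image fun s => (i + Nat.find (mex s), j + s)) ∪
      (D \ ((Finset.range t).image fun s => (i, j + s + 1))) with hE
  have memE : ∀ t p, p ∈ E t ↔
      ((∃ s', s' < t ∧ p = (i + Nat.find (mex s'), j + s')) ∨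
        (p ∈ D ∧ ∀ s', s' < t → p ≠ (i, j + s' + 1))) := by
    intro t p
    simp only [hE, Finset.mem_union, Finset.mem_image, Finset.mem_sdiff, Finset.mem_range]
    constructor
    · rintro (⟨s', hs', rfl⟩ | ⟨hp, hni⟩)
      · exact Or.inl ⟨s', hs', rfl⟩
      · exact Or.inr ⟨hp, fun s' hs' hpe => hni ⟨s', hs', hpe.symm⟩⟩
    · rintro (⟨s', hs', rfl⟩ | ⟨hp, hne⟩)
      · exact Or.inl ⟨s', hs', rfl⟩
      · exact Or.inr ⟨hp, fun hex => by
          obtain ⟨s', hs', hpe⟩ := hex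
          exact hne s' hs' hpe.symm⟩
  have hE0 : E 0 = D := by
    ext p
    rw [memE]
    simp
  have step : ∀ t, t < k - j → IsPipeDream n u (E t) →
      (IsInvLadderMove (E t) (E (t+1)) i (j+1+t) ∧ IsPipeDream n u (E (t+1))) := by
    intro t ht hPD
    obtain ⟨hEΔ, hEperm, hEcard⟩ := hPD
    have e1 : (i, j+t) ∉ E t := by
      rw [memE]
      rintro (⟨s', hs', hp⟩ | ⟨hmem, hnot⟩)
      · have h1 := mf_pos s'
        rw [Prod.mk.injEq] at hp
        omega
      · rcases Nat.eq_zero_or_pos t with h0 | h0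
        · subst h0
          exact hij.1 (by simpa using hmem)
        · exact hnot (t-1) (by omega) (by rw [Prod.mk.injEq]; omega)
    have e2 : (i, j+t+1) ∈ E t := by
      rw [memE]
      right
      refine ⟨hrowi (j+t+1) (by omega) (by omega), ?_⟩
      intro s' hs' hp
      rw [Prod.mk.injEq] at hp
      omega
    have e3 : (i + Nat.find (mex t), j+t) ∉ E t := by
      rw [memE]
      rintro (⟨s', hs', hp⟩ | ⟨hmem, _⟩)
      · have h1 := mf_pos s'
        rw [Prod.mk.injEq] at hp
        omega
      · exact mf_not1 t hmem
    have e4 : (i + Nat.find (mex t), j+t+1) ∉ E t := by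
      rw [memE]
      rintro (⟨s', hs', hp⟩ | ⟨hmem, _⟩)
      · rw [Prod.mk.injEq] at hp
        omega
      · exact mf_not2 t hmem
    have hc2n : j + t + 2 ≤ n := by omega
    have hbet2 : ∀ q, 1 ≤ q → q < Nat.find (mex t) → (i+q, j+t+1) ∈ D := by
      by_contra hcon
      push_neg at hcon
      obtain ⟨q0, hq01, hq0s, hq0mem⟩ := hcon
      have hPex : ∃ q, 1 ≤ q ∧ q < Nat.find (mex t) ∧ (i+q, j+t+1) ∉ D :=
        ⟨q0, hq01, hq0s, hq0mem⟩
      obtain ⟨hq11, hq1s, hq1mem⟩ := Nat.find_spec hPex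
      have hq1min : ∀ q, 1 ≤ q → q < Nat.find hPex → (i+q, j+t+1) ∈ D := by
        intro q ha hb
        have h5 := Nat.find_min hPex hb
        by_contra hq
        exact h5 ⟨ha, by omega, hq⟩
      have f1 : (i + Nat.find hPex, j+t) ∈ E t := by
        rw [memE]
        right
        refine ⟨mf_min t _ hq11 hq1s, ?_⟩
        intro s' hs' hp
        rw [Prod.mk.injEq] at hp
        omega
      have f2 : (i + Nat.find hPex, j+t+1) ∉ E t := by
        rw [memE]
        rintro (⟨s', hs', hp⟩ | ⟨hmem, _⟩)
        · rw [Prod.mk.injEq] at hp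
          omega
        · exact hq1mem hmem
      have fbet : ∀ q, 1 ≤ q → q < Nat.find hPex →
          (i+q, j+t) ∈ E t ∧ (i+q, j+t+1) ∈ E t := by
        intro q ha hb
        constructor
        · rw [memE]
          right
          refine ⟨mf_min t q ha (by omega), fun s' hs' hp => ?_⟩
          rw [Prod.mk.injEq] at hp
          omega
        · rw [memE]
          right
          refine ⟨hq1min q ha hb, fun s' hs' hp => ?_⟩
          rw [Prod.mk.injEq] at hp
          omega
      have g1 : (i, j+t) ∉ ((E t).erase (i, j+t+1)).erase (i + Nat.find hPex, j+t) :=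
        fun h => e1 (Finset.mem_of_mem_erase (Finset.mem_of_mem_erase h))
      have g2 : (i, j+t+1) ∉ ((E t).erase (i, j+t+1)).erase (i + Nat.find hPex, j+t) :=
        fun h => (Finset.notMem_erase _ _) (Finset.mem_of_mem_erase h)
      have g3 : (i + Nat.find hPex, j+t) ∉
          ((E t).erase (i, j+t+1)).erase (i + Nat.find hPex, j+t) :=
        Finset.notMem_erase _ _
      have g4 : (i + Nat.find hPex, j+t+1) ∉
          ((E t).erase (i, j+t+1)).erase (i + Nat.find hPex, j+t) :=
        fun h => f2 (Finset.mem_of_mem_erase (Finset.mem_of_mem_erase h))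
      have gbet : ∀ q, 1 ≤ q → q < Nat.find hPex →
          (i+q, j+t) ∈ ((E t).erase (i, j+t+1)).erase (i + Nat.find hPex, j+t) ∧
          (i+q, j+t+1) ∈ ((E t).erase (i, j+t+1)).erase (i + Nat.find hPex, j+t) := by
        intro q ha hb
        obtain ⟨m1, m2⟩ := fbet q ha hb
        exact ⟨Finset.mem_erase.mpr ⟨by rw [Ne, Prod.mk.injEq]; omega,
            Finset.mem_erase.mpr ⟨by rw [Ne, Prod.mk.injEq]; omega, m1⟩⟩,
          Finset.mem_erase.mpr ⟨by rw [Ne, Prod.mk.injEq]; omega,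
            Finset.mem_erase.mpr ⟨by rw [Ne, Prod.mk.injEq]; omega, m2⟩⟩⟩
      have hq1n : i + Nat.find hPex < n := by
        have h5 : i + Nat.find hPex + (j+t) + 1 ≤ n := hEΔ _ f1
        omega
      have hmas := (master (((E t).erase (i, j+t+1)).erase (i + Nat.find hPex, j+t))
        hq11 hc2n hq1n g1 g2 g3 g4 gbet).2
      have hins1 : insert (i + Nat.find hPex, j+t)
          (((E t).erase (i, j+t+1)).erase (i + Nat.find hPex, j+t)) =
          (E t).erase (i, j+t+1) :=
        Finset.insert_erase (Finset.mem_erase.mpr ⟨by rw [Ne, Prod.mk.injEq]; omega, f1⟩)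
      rw [hins1, Finset.insert_erase e2, hEperm] at hmas
      have hFsub : ∀ p ∈ ((E t).erase (i, j+t+1)).erase (i + Nat.find hPex, j+t), p ∈ E t :=
        fun p hp => Finset.mem_of_mem_erase (Finset.mem_of_mem_erase hp)
      have hlen : (pdWord n (((E t).erase (i, j+t+1)).erase (i + Nat.find hPex, j+t))).length =
          (((E t).erase (i, j+t+1)).erase (i + Nat.find hPex, j+t)).card :=
        pdWord_length n _ (fun p hp => by have := hEΔ p (hFsub p hp); omega)
      have hinv : inversions u ≤ (((E t).erase (i, j+t+1)).erase (i + Nat.find hPex, j+t)).card := by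
        rw [hmas, pdPerm_eq_wp]
        calc inversions (wp (pdWord n _)) ≤ _ := inversions_wp_le _
          _ = _ := hlen
      have hcard2 : 1 < (E t).card := by
        rw [Finset.one_lt_card]
        exact ⟨_, e2, _, f1, by rw [Ne, Prod.mk.injEq]; omega⟩
      have hF0card : (((E t).erase (i, j+t+1)).erase (i + Nat.find hPex, j+t)).card =
          (E t).card - 2 := by
        rw [Finset.card_erase_of_mem
            (Finset.mem_erase.mpr ⟨by rw [Ne, Prod.mk.injEq]; omega, f1⟩),
          Finset.card_erase_of_mem e2]
        omega
      omega

    have hbetE : ∀ q, 1 ≤ q → q < Nat.find (mex t) →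
        (i+q, j+t) ∈ E t ∧ (i+q, j+t+1) ∈ E t := by
      intro q ha hb
      constructor
      · rw [memE]
        right
        exact ⟨mf_min t q ha hb, fun s' hs' hp => by rw [Prod.mk.injEq] at hp; omega⟩
      · rw [memE]
        right
        exact ⟨hbet2 q ha hb, fun s' hs' hp => by rw [Prod.mk.injEq] at hp; omega⟩
    have hIns : i + Nat.find (mex t) + (j+t) + 1 ≤ n := by
      have hp0 := mf_pos t
      rcases Nat.lt_or_ge (Nat.find (mex t)) 2 with h1 | h1
      · have h5 : i + (j+t+1) + 1 ≤ n := hEΔ _ e2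
        omega
      · have hq := hbet2 (Nat.find (mex t) - 1) (by omega) (by omega)
        have h5 : (i + (Nat.find (mex t) - 1)) + (j+t+1) + 1 ≤ n := hDΔ _ hq
        omega
    have hisn : i + Nat.find (mex t) < n := by omega
    have hEt1 : E (t+1) = insert (i + Nat.find (mex t), j+t) ((E t).erase (i, j+t+1)) := by
      ext p
      rw [memE, Finset.mem_insert, Finset.mem_erase, memE]
      constructor
      · rintro (⟨s', hs', rfl⟩ | ⟨hmem, hnot⟩)
        · rcases Nat.lt_or_ge s' t with h | h
          · right
            refine ⟨by rw [Ne, Prod.mk.injEq]; have := mf_pos s'; omega, Or.inl ⟨s', h, rfl⟩⟩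
          · left
            have hst : s' = t := by omega
            subst hst
            rfl
        · right
          refine ⟨hnot t (by omega), Or.inr ⟨hmem, fun s' hs' => hnot s' (by omega)⟩⟩
      · rintro (rfl | ⟨hne', (⟨s', hs', rfl⟩ | ⟨hmem, hnot⟩)⟩)
        · exact Or.inl ⟨t, by omega, rfl⟩
        · exact Or.inl ⟨s', by omega, rfl⟩
        · right
          refine ⟨hmem, fun s' hs' => ?_⟩
          rcases Nat.lt_or_ge s' t with h | h
          · exact hnot s' h
          · have hst : s' = t := by omega
            subst hst
            exact hne'
    have g1 : (i, j+t) ∉ (E t).erase (i, j+t+1) := fun h => e1 (Finset.mem_of_mem_erase h)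
    have g2 : (i, j+t+1) ∉ (E t).erase (i, j+t+1) := Finset.notMem_erase _ _
    have g3 : (i + Nat.find (mex t), j+t) ∉ (E t).erase (i, j+t+1) :=
      fun h => e3 (Finset.mem_of_mem_erase h)
    have g4 : (i + Nat.find (mex t), j+t+1) ∉ (E t).erase (i, j+t+1) :=
      fun h => e4 (Finset.mem_of_mem_erase h)
    have gbet : ∀ q, 1 ≤ q → q < Nat.find (mex t) →
        (i+q, j+t) ∈ (E t).erase (i, j+t+1) ∧ (i+q, j+t+1) ∈ (E t).erase (i, j+t+1) := by
      intro q ha hb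
      obtain ⟨m1, m2⟩ := hbetE q ha hb
      exact ⟨Finset.mem_erase.mpr ⟨by rw [Ne, Prod.mk.injEq]; omega, m1⟩,
        Finset.mem_erase.mpr ⟨by rw [Ne, Prod.mk.injEq]; omega, m2⟩⟩
    have hmasA := (master ((E t).erase (i, j+t+1)) (mf_pos t) hc2n hisn g1 g2 g3 g4 gbet).1
    rw [Finset.insert_erase e2, hEperm, ← hEt1] at hmasA
    have hperm' : pdPerm n (E (t+1)) = u := hmasA.symm
    have hΔ' : ∀ p ∈ E (t+1), p.1 + p.2 + 1 ≤ n := by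
      intro p hp
      rw [hEt1] at hp
      rcases Finset.mem_insert.mp hp with rfl | hp'
      · exact hIns
      · exact hEΔ p (Finset.mem_of_mem_erase hp')
    have hcard' : (E (t+1)).card = inversions u := by
      rw [hEt1, Finset.card_insert_of_notMem g3, Finset.card_erase_of_mem e2]
      have h5 : 1 ≤ (E t).card := Finset.card_pos.mpr ⟨_, e2⟩
      omega
    refine ⟨⟨i + Nat.find (mex t), Nat.find (mex t), by omega, ?_⟩, hΔ', hperm', hcard'⟩
    have harith : j + 1 + t - 1 = j + t := by omega
    rw [harith]
    have hss : i + Nat.find (mex t) - Nat.find (mex t) = i := by omega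
    refine ⟨mf_pos t, by omega, ?_, ?_, ?_, ?_, ?_, ?_⟩
    · rw [hEt1]
      exact Finset.mem_insert_self _ _
    · rw [hEt1, Finset.mem_insert]
      rintro (h | h)
      · rw [Prod.mk.injEq] at h
        omega
      · exact e4 (Finset.mem_of_mem_erase h)
    · rw [hss, hEt1, Finset.mem_insert]
      rintro (h | h)
      · rw [Prod.mk.injEq] at h
        have := mf_pos t
        omega
      · exact e1 (Finset.mem_of_mem_erase h)
    · rw [hss, hEt1, Finset.mem_insert]
      rintro (h | h)
      · rw [Prod.mk.injEq] at h
        omega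
      · exact (Finset.notMem_erase _ _) h
    · intro k' hk1 hk2
      have hrw : i + Nat.find (mex t) - k' = i + (Nat.find (mex t) - k') := by omega
      rw [hrw]
      obtain ⟨m1, m2⟩ := hbetE (Nat.find (mex t) - k') (by omega) (by omega)
      constructor
      · rw [hEt1, Finset.mem_insert]
        right
        exact Finset.mem_erase.mpr ⟨by rw [Ne, Prod.mk.injEq]; omega, m1⟩
      · rw [hEt1, Finset.mem_insert]
        right
        exact Finset.mem_erase.mpr ⟨by rw [Ne, Prod.mk.injEq]; omega, m2⟩
    · have herase : (E (t+1)).erase (i + Nat.find (mex t), j+t) = (E t).erase (i, j+t+1) := by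
        rw [hEt1]
        exact Finset.erase_insert g3
      rw [hss, herase]
      exact (Finset.insert_erase e2).symm
  have pdAll : ∀ t', t' ≤ k - j → IsPipeDream n u (E t') := by
    intro t'
    induction t' with
    | zero => intro _; rw [hE0]; exact ⟨hDΔ, hDperm, hDcard⟩
    | succ t'' ih => intro h; exact (step t'' (by omega) (ih (by omega))).2
  exact ⟨E, hE0, fun t ht => step t ht (pdAll t (Nat.le_of_lt ht))⟩
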